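/- Let p ∈ (0,1], λ, δ > 0 and h ∈ ℝ be such that Φ_p(λ,h) > λh + δ. Then for every ε ∈ (0,δ) there exists δ̃ > 0 such that for all sufficiently large m, ℙ[(1/m) log Z^0_{−m,0} < Φ_p(λ,h) − ε] ≤ exp{−δ̃ m}. -/

import Mathlib

/- A heteropolymer in a medium with random droplets (Wüthrich, Ann. Appl. Probab. 2006).

A path in `C^{k+m}_{k,x}` is encoded by its sequence of `m` increments: at each step every
one of the `d` coordinates changes by `±1`, so an increment is an element of `Fin d → Bool`
(`true` = `+1`, `false` = `-1`).  The uniform measure on paths corresponds to the uniform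
measure on step sequences, so expectations under `P^{k+m}_{k,x}` are normalized sums over
all step sequences. -/

open MeasureTheory Filter Real

namespace Hetero

variable (d : ℕ)

/-- Step sequences of length `m`. -/
abbrev Steps (m : ℕ) := Fin m → Fin d → Bool

/-- Position (in `ℤ^d`) after `j` steps of the walk started at `x`. -/
def pos (x : Fin d → ℤ) {m : ℕ} (s : Steps d m) (j : ℕ) : Fin d → ℤ :=
  fun c => x c + ∑ i ∈ Finset.range j,
    (if hi : i < m then (if s ⟨i, hi⟩ c then 1 else -1) else 0)

/-- `Δ_η(S_i)`: `-1` if the walk is at the origin (of `ℤ^d`) and there is a droplet there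
(`η_i = 1`), and `+1` otherwise. -/
noncomputable def del (et : ℤ → ℝ) (t : ℤ) (y : Fin d → ℤ) : ℝ :=
  if y = 0 ∧ et t = 1 then -1 else 1

/-- Energy `λ ∑_{i=k+1}^{k+m} Δ_η(S_i)(ω_i + h)` of the polymer started at time `k`
at site `x`, performing the `m` steps `s`. -/
noncomputable def ham (lam h : ℝ) (om et : ℤ → ℝ) (k : ℤ) (x : Fin d → ℤ) {m : ℕ}
    (s : Steps d m) : ℝ :=
  lam * ∑ j ∈ Finset.Icc 1 m, del d et (k + (j : ℤ)) (pos d x s j) * (om (k + (j : ℤ)) + h)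

/-- Partition sum `Z^{k+m}_{k,x}(ω,η)`. -/
noncomputable def Z (lam h : ℝ) (om et : ℤ → ℝ) (k : ℤ) (x : Fin d → ℤ) (m : ℕ) : ℝ :=
  (∑ s : Steps d m, Real.exp (ham d lam h om et k x s)) / 2 ^ (d * m)

/-- Restricted partition sum `Ẑ^{k+m}_{k,x}(ω,η)` (only paths ending at the origin). -/
noncomputable def Zhat (lam h : ℝ) (om et : ℤ → ℝ) (k : ℤ) (x : Fin d → ℤ) (m : ℕ) : ℝ :=
  (∑ s : Steps d m, Set.indicator {s : Steps d m | pos d x s m = 0}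
      (fun s => Real.exp (ham d lam h om et k x s)) s) / 2 ^ (d * m)

/-- `Ψ^{k+m}_{k,x}(ω,η) = E^{k+m}_{k,x}[exp{λ ∑ (Δ_η(S_i) - 1)(ω_i + h)}]`. -/
noncomputable def Psi (lam h : ℝ) (om et : ℤ → ℝ) (k : ℤ) (x : Fin d → ℤ) (m : ℕ) : ℝ :=
  (∑ s : Steps d m, Real.exp (lam * ∑ j ∈ Finset.Icc 1 m,
      (del d et (k + (j : ℤ)) (pos d x s j) - 1) * (om (k + (j : ℤ)) + h))) / 2 ^ (d * m)

/-- Quenched polymer probability `Q^{k+m}_{k,x}[A](ω,η)` of a path event `A`. -/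
noncomputable def Qprob (lam h : ℝ) (om et : ℤ → ℝ) (k : ℤ) (x : Fin d → ℤ) (m : ℕ)
    (A : Set (Steps d m)) : ℝ :=
  (∑ s : Steps d m, Set.indicator A (fun s => Real.exp (ham d lam h om et k x s)) s) /
    (∑ s : Steps d m, Real.exp (ham d lam h om et k x s))

/-- Simple-random-walk probability `P^{k+m}_{k,x}[A]` of a path event `A` (it does not
depend on `k` and `x`, which only shift the path). -/
noncomputable def Pprob (m : ℕ) (A : Set (Steps d m)) : ℝ :=
  (∑ s : Steps d m, Set.indicator A (fun _ => (1 : ℝ)) s) / 2 ^ (d * m)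

/-- Probability that the `m`-step walk started at the origin does not revisit the origin. -/
noncomputable def noReturn (m : ℕ) : ℝ :=
  Pprob d m {s : Steps d m | ∀ i, 1 ≤ i → i ≤ m → pos d 0 s i ≠ 0}

/-- `α(d) = P^∞_{0,0}[w(i) ≠ 0 for all i ≥ 1]`: the probability that the walk never
returns to the origin.  By continuity from above it is the (decreasing) limit, i.e. the
infimum, of the finite-horizon no-return probabilities. -/
noncomputable def alpha : ℝ := ⨅ m : ℕ, noReturn d m

/-- `N_m`: number of returns of the walk (started at the origin) to the origin in `(0, m]`. -/
def Nret (m : ℕ) (s : Steps d m) : ℕ :=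
  ((Finset.Icc 1 m).filter (fun i => pos d 0 s i = 0)).card

/-- Euclidean norm of a point of `ℤ^d`. -/
noncomputable def nrm (x : Fin d → ℤ) : ℝ := Real.sqrt (∑ c, ((x c : ℝ)) ^ 2)

end Hetero


namespace HeteroAux
open Hetero Finset MeasureTheory Filter Real

section Cube

variable {α : Type*} [Fintype α] (wc : α → ℝ)

def W {m : ℕ} (x : Fin m → α) : ℝ := ∏ j, wc (x j)

/-- weighted expectation -/
def Ew {m : ℕ} (F : (Fin m → α) → ℝ) : ℝ := ∑ x, W wc x * F x

lemma W_nonneg (hw0 : ∀ a, 0 ≤ wc a) {m : ℕ} (x : Fin m → α) : 0 ≤ W wc x :=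
  Finset.prod_nonneg fun j _ => hw0 _

lemma sum_W (hw1 : ∑ a, wc a = 1) (m : ℕ) : ∑ x : Fin m → α, W wc x = 1 := by
  have := (Finset.prod_univ_sum (fun _ : Fin m => (univ : Finset α)) (fun _ a => wc a)).symm
  simpa [W, hw1] using this

lemma W_cons {m : ℕ} (a : α) (x : Fin m → α) :
    W wc (Fin.cons a x) = wc a * W wc x := by
  rw [W, Fin.prod_univ_succ]
  simp [W]

lemma Ew_succ {m : ℕ} (F : (Fin (m+1) → α) → ℝ) :
    Ew wc F = ∑ x : Fin m → α, W wc x * ∑ a, wc a * F (Fin.cons a x) := by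
  rw [Ew, ← (Fin.consEquiv (fun _ => α)).sum_comp (fun y => W wc y * F y)]
  rw [Fintype.sum_prod_type, Finset.sum_comm]
  refine Finset.sum_congr rfl fun x _ => ?_
  rw [Finset.mul_sum]
  refine Finset.sum_congr rfl fun a _ => ?_
  show W wc (Fin.cons a x) * F (Fin.cons a x) = W wc x * (wc a * F (Fin.cons a x))
  rw [W_cons]
  ring

lemma chord {c s : ℝ} (hc : 0 < c) {y : ℝ} (hy : |y| ≤ c) :
    Real.exp (s * y) ≤ Real.cosh (s * c) + (y / c) * Real.sinh (s * c) := by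
  have h1 : -c ≤ y := (abs_le.1 hy).1
  have h2 : y ≤ c := (abs_le.1 hy).2
  set θ : ℝ := (c - y) / (2 * c) with hθ
  have hθ0 : 0 ≤ θ := div_nonneg (by linarith) (by positivity)
  have hθ1 : 0 ≤ 1 - θ := by
    rw [hθ]; rw [sub_nonneg, div_le_one (by positivity)]; linarith
  have hθ2 : θ * (2 * c) = c - y := by rw [hθ]; exact div_mul_cancel₀ _ (by positivity)
  have key := convexOn_exp.2 (Set.mem_univ (-(s*c))) (Set.mem_univ (s*c)) hθ0 hθ1 (by ring)
  have harg : θ • (-(s*c)) + (1-θ) • (s*c) = s * y := by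
    field_simp [hθ]
    linear_combination (-s) * hθ2
  rw [harg] at key
  rw [Real.cosh_eq, Real.sinh_eq]
  have hexp := key
  simp only [smul_eq_mul] at hexp
  calc Real.exp (s*y) ≤ θ * Real.exp (-(s*c)) + (1-θ) * Real.exp (s*c) := hexp
    _ = (Real.exp (s*c) + Real.exp (-(s*c)))/2 + (y/c) * ((Real.exp (s*c) - Real.exp (-(s*c)))/2) := by
        have hyc : y / c = 1 - 2 * θ := by rw [div_eq_iff hc.ne']; linear_combination hθ2
        linear_combination ((Real.exp (-(s*c)) - Real.exp (s*c)) / 2) * hyc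

lemma mgf_le (hw0 : ∀ a, 0 ≤ wc a) (hw1 : ∑ a, wc a = 1)
    {c s : ℝ} (hc : 0 < c) (Y : α → ℝ)
    (hY0 : ∑ a, wc a * Y a = 0) (hY : ∀ a, |Y a| ≤ c) :
    ∑ a, wc a * Real.exp (s * Y a) ≤ Real.cosh (s * c) := by
  have step : ∀ a, wc a * Real.exp (s * Y a) ≤
      wc a * (Real.cosh (s*c) + (Y a / c) * Real.sinh (s*c)) := fun a =>
    mul_le_mul_of_nonneg_left (chord hc (hY a)) (hw0 a)
  calc ∑ a, wc a * Real.exp (s * Y a)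
      ≤ ∑ a, wc a * (Real.cosh (s*c) + (Y a / c) * Real.sinh (s*c)) :=
        Finset.sum_le_sum fun a _ => step a
    _ = (∑ a, wc a) * Real.cosh (s*c) + (Real.sinh (s*c) / c) * ∑ a, wc a * Y a := by
        rw [Finset.sum_mul, Finset.mul_sum, ← Finset.sum_add_distrib]
        refine Finset.sum_congr rfl fun a _ => ?_
        field_simp
    _ = Real.cosh (s*c) := by rw [hw1, hY0]; ring


/-- difference bound transfers to the conditional average -/
lemma avg_diff_le (hw0 : ∀ a, 0 ≤ wc a) (hw1 : ∑ a, wc a = 1)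
    {c : ℝ} (g g' : α → ℝ) (hgg : ∀ a, |g a - g' a| ≤ c) :
    |∑ a, wc a * g a - ∑ a, wc a * g' a| ≤ c := by
  rw [← Finset.sum_sub_distrib]
  calc |∑ a, (wc a * g a - wc a * g' a)| ≤ ∑ a, |wc a * g a - wc a * g' a| :=
        Finset.abs_sum_le_sum_abs _ _
    _ ≤ ∑ a, wc a * c := by
        refine Finset.sum_le_sum fun a _ => ?_
        rw [← mul_sub, abs_mul, abs_of_nonneg (hw0 a)]
        exact mul_le_mul_of_nonneg_left (hgg a) (hw0 a)
    _ = c := by rw [← Finset.sum_mul, hw1, one_mul]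

lemma mcdiarmid (hw0 : ∀ a, 0 ≤ wc a) (hw1 : ∑ a, wc a = 1)
    {c : ℝ} (hc : 0 < c) (s : ℝ) :
    ∀ (m : ℕ) (F : (Fin m → α) → ℝ),
      (∀ (x y : Fin m → α) (j : Fin m), (∀ i, i ≠ j → x i = y i) → |F x - F y| ≤ c) →
      Ew wc (fun x => Real.exp (s * (Ew wc F - F x))) ≤ Real.cosh (s * c) ^ m := by
  have hne : Nonempty α := by
    by_contra hne
    rw [not_nonempty_iff] at hne
    rw [Finset.univ_eq_empty, Finset.sum_empty] at hw1
    norm_num at hw1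
  intro m
  induction m with
  | zero =>
    intro F _
    simp [Ew, W]
  | succ m ih =>
    intro F hF
    set G : (Fin m → α) → ℝ := fun x => ∑ a, wc a * F (Fin.cons a x) with hGdef
    have hEF : Ew wc F = Ew wc G := by
      rw [Ew_succ]; rfl
    -- bounded difference for G
    have hG : ∀ (x y : Fin m → α) (j : Fin m), (∀ i, i ≠ j → x i = y i) → |G x - G y| ≤ c := by
      intro x y j hxy
      refine avg_diff_le wc hw0 hw1 _ _ fun a => ?_
      refine hF _ _ j.succ fun i hi => ?_
      rcases Fin.eq_zero_or_eq_succ i with rfl | ⟨i', rfl⟩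
      · simp
      · simp only [Fin.cons_succ]
        exact hxy i' (fun hji => hi (by rw [hji]))
    -- per-x centered variable bound
    have hY : ∀ (x : Fin m → α) (a : α), |G x - F (Fin.cons a x)| ≤ c := by
      intro x a
      have : G x - F (Fin.cons a x) = ∑ b, wc b * (F (Fin.cons b x) - F (Fin.cons a x)) := by
        rw [hGdef]
        simp only [mul_sub, Finset.sum_sub_distrib, ← Finset.sum_mul, hw1, one_mul]
      rw [this]
      calc |∑ b, wc b * (F (Fin.cons b x) - F (Fin.cons a x))|
          ≤ ∑ b, |wc b * (F (Fin.cons b x) - F (Fin.cons a x))| := Finset.abs_sum_le_sum_abs _ _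
        _ ≤ ∑ b, wc b * c := by
            refine Finset.sum_le_sum fun b _ => ?_
            rw [abs_mul, abs_of_nonneg (hw0 b)]
            refine mul_le_mul_of_nonneg_left ?_ (hw0 b)
            refine hF _ _ 0 fun i hi => ?_
            obtain ⟨i', rfl⟩ := Fin.eq_succ_of_ne_zero hi
            simp
        _ = c := by rw [← Finset.sum_mul, hw1, one_mul]
    have hcosh1 : (1:ℝ) ≤ Real.cosh (s * c) := Real.one_le_cosh _
    calc Ew wc (fun x => Real.exp (s * (Ew wc F - F x)))
        = ∑ x : Fin m → α, W wc x * ∑ a, wc a *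
            (Real.exp (s * (Ew wc G - G x)) * Real.exp (s * (G x - F (Fin.cons a x)))) := by
          rw [Ew_succ]
          refine Finset.sum_congr rfl fun x _ => ?_
          congr 1
          refine Finset.sum_congr rfl fun a _ => ?_
          rw [← Real.exp_add, hEF]
          ring_nf
      _ ≤ ∑ x : Fin m → α, W wc x * (Real.exp (s * (Ew wc G - G x)) * Real.cosh (s * c)) := by
          refine Finset.sum_le_sum fun x _ => ?_
          refine mul_le_mul_of_nonneg_left ?_ (W_nonneg wc hw0 x)
          have : ∑ a, wc a * (Real.exp (s * (Ew wc G - G x)) * Real.exp (s * (G x - F (Fin.cons a x))))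
              = Real.exp (s * (Ew wc G - G x)) * ∑ a, wc a * Real.exp (s * (G x - F (Fin.cons a x))) := by
            rw [Finset.mul_sum]; refine Finset.sum_congr rfl fun a _ => ?_; ring
          rw [this]
          refine mul_le_mul_of_nonneg_left ?_ (Real.exp_nonneg _)
          have hcent : ∑ a, wc a * (G x - F (Fin.cons a x)) = 0 := by
            simp only [mul_sub, Finset.sum_sub_distrib, ← Finset.sum_mul, hw1, one_mul, hGdef]
            exact sub_self _
          exact mgf_le wc hw0 hw1 hc _ hcent (hY x)
      _ = Real.cosh (s*c) * Ew wc (fun x => Real.exp (s * (Ew wc G - G x))) := by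
          simp only [Ew, Finset.mul_sum]
          refine Finset.sum_congr rfl fun x _ => ?_
          ring
      _ ≤ Real.cosh (s*c) * Real.cosh (s*c) ^ m := by
          refine mul_le_mul_of_nonneg_left (ih G hG) (le_trans zero_le_one hcosh1)
      _ = Real.cosh (s*c) ^ (m+1) := by ring


lemma cube_chernoff (hw0 : ∀ a, 0 ≤ wc a) (hw1 : ∑ a, wc a = 1)
    {c : ℝ} (hc : 0 < c) {s : ℝ} (hs : 0 ≤ s) (t : ℝ) (m : ℕ) (F : (Fin m → α) → ℝ)
    (hF : ∀ (x y : Fin m → α) (j : Fin m), (∀ i, i ≠ j → x i = y i) → |F x - F y| ≤ c) :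
    ∑ x ∈ Finset.univ.filter (fun x => F x < Ew wc F - t), W wc x ≤
      Real.exp (-(s*t)) * Real.cosh (s*c) ^ m := by
  calc ∑ x ∈ Finset.univ.filter (fun x => F x < Ew wc F - t), W wc x
      ≤ ∑ x ∈ Finset.univ.filter (fun x => F x < Ew wc F - t),
          W wc x * (Real.exp (-(s*t)) * Real.exp (s * (Ew wc F - F x))) := by
        refine Finset.sum_le_sum fun x hx => ?_
        rw [Finset.mem_filter] at hx
        have h1 : (1:ℝ) ≤ Real.exp (-(s*t)) * Real.exp (s * (Ew wc F - F x)) := by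
          rw [← Real.exp_add, ← Real.exp_zero]
          apply Real.exp_le_exp.mpr
          have : t ≤ Ew wc F - F x := by linarith [hx.2]
          nlinarith [hx.2]
        nlinarith [W_nonneg wc hw0 x, h1]
    _ ≤ ∑ x : Fin m → α, W wc x * (Real.exp (-(s*t)) * Real.exp (s * (Ew wc F - F x))) := by
        refine Finset.sum_le_sum_of_subset_of_nonneg (Finset.filter_subset _ _) fun x _ _ => ?_
        have := W_nonneg wc hw0 x
        positivity
    _ = Real.exp (-(s*t)) * Ew wc (fun x => Real.exp (s * (Ew wc F - F x))) := by
        simp only [Ew, Finset.mul_sum]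
        exact Finset.sum_congr rfl fun x _ => by ring
    _ ≤ Real.exp (-(s*t)) * Real.cosh (s*c) ^ m := by
        exact mul_le_mul_of_nonneg_left (mcdiarmid wc hw0 hw1 hc s m F hF) (Real.exp_nonneg _)

lemma exists_rate {c e : ℝ} (hc : 0 < c) (he : 0 < e) :
    ∃ s : ℝ, 0 < s ∧ Real.cosh (s*c) < Real.exp (s*e) := by
  set f : ℝ → ℝ := fun s => Real.exp (s*e) - Real.cosh (s*c) with hf
  have h1 : HasDerivAt (fun s : ℝ => s * e) e 0 := by
    simpa using (hasDerivAt_id (0:ℝ)).mul_const e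
  have h2 : HasDerivAt (fun s : ℝ => s * c) c 0 := by
    simpa using (hasDerivAt_id (0:ℝ)).mul_const c
  have hexp : HasDerivAt (fun s : ℝ => Real.exp (s*e)) e 0 := by
    simpa [Function.comp_def] using (Real.hasDerivAt_exp (0*e)).comp 0 h1
  have hcosh : HasDerivAt (fun s : ℝ => Real.cosh (s*c)) 0 0 := by
    simpa [Function.comp_def] using (Real.hasDerivAt_cosh (0*c)).comp 0 h2
  have hder : HasDerivAt f e 0 := by simpa [hf, Pi.sub_def] using hexp.sub hcosh
  have hslope := hasDerivAt_iff_tendsto_slope.mp hder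
  have hev : ∀ᶠ s in nhdsWithin 0 {(0:ℝ)}ᶜ, 0 < slope f 0 s :=
    hslope.eventually (eventually_gt_nhds he)
  have hev2 : ∀ᶠ s in nhdsWithin 0 (Set.Ioi 0), 0 < slope f 0 s :=
    hev.filter_mono (nhdsWithin_mono 0 (fun x hx => Set.mem_compl_singleton_iff.mpr (ne_of_gt hx)))
  obtain ⟨s, hs1, hs2⟩ := (hev2.and self_mem_nhdsWithin).exists
  refine ⟨s, hs2, ?_⟩
  have hf0 : f 0 = 0 := by simp [hf]
  rw [slope_def_field, hf0, sub_zero, sub_zero] at hs1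
  have hfs : 0 < f s := by
    have heq : f s = (f s / s) * s := (div_mul_cancel₀ _ (ne_of_gt hs2)).symm
    rw [heq]; exact mul_pos hs1 hs2
  simp only [hf, sub_pos] at hfs
  exact hfs

end Cube

section Poly

def val (b : Bool) : ℝ := if b then 1 else -1

lemma val_abs (b : Bool) : |val b| = 1 := by cases b <;> simp [val]

lemma val_eq_one_or (b : Bool) : val b = 1 ∨ val b = -1 := by cases b <;> simp [val]

lemma val_inj {b b' : Bool} (hbb : val b = val b') : b = b' := by
  cases b <;> cases b' <;> simp [val] at hbb ⊢ <;> norm_num at hbb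

lemma val_decide (r : ℝ) (hr : r = 1 ∨ r = -1) : val (decide (r = 1)) = r := by
  classical
  rcases hr with rfl | rfl
  · simp [val]
  · norm_num [val]

def omOf {m : ℕ} (x : Fin m → Bool × Bool) : ℤ → ℝ := fun t =>
  if ht : 0 < t ∧ t ≤ (m:ℤ) then val (x ⟨(t-1).toNat, by omega⟩).1 else 1

def etOf {m : ℕ} (x : Fin m → Bool × Bool) : ℤ → ℝ := fun t =>
  if ht : 0 < t ∧ t ≤ (m:ℤ) then val (x ⟨(t-1).toNat, by omega⟩).2 else 1

lemma omOf_eval {m : ℕ} (x : Fin m → Bool × Bool) (j : ℕ) (h1 : 1 ≤ j) (h2 : j ≤ m) :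
    omOf x (j : ℤ) = val (x ⟨j - 1, by omega⟩).1 := by
  rw [omOf]
  rw [dif_pos (by constructor <;> omega)]
  have hidx : (⟨((j:ℤ)-1).toNat, by omega⟩ : Fin m) = ⟨j - 1, by omega⟩ :=
    Fin.mk_eq_mk.mpr (by omega)
  rw [hidx]

lemma etOf_eval {m : ℕ} (x : Fin m → Bool × Bool) (j : ℕ) (h1 : 1 ≤ j) (h2 : j ≤ m) :
    etOf x (j : ℤ) = val (x ⟨j - 1, by omega⟩).2 := by
  rw [etOf]
  rw [dif_pos (by constructor <;> omega)]
  have hidx : (⟨((j:ℤ)-1).toNat, by omega⟩ : Fin m) = ⟨j - 1, by omega⟩ :=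
    Fin.mk_eq_mk.mpr (by omega)
  rw [hidx]

variable (d : ℕ) (lam h : ℝ)

/-- the cube function: log of the partition sum as a function of the disorder values -/
noncomputable def Fn (m : ℕ) (x : Fin m → Bool × Bool) : ℝ :=
  Real.log (Z d lam h (omOf x) (etOf x) 0 0 m)

lemma del_abs (et : ℤ → ℝ) (t : ℤ) (y : Fin d → ℤ) : |del d et t y| = 1 := by
  rw [del]; split <;> simp

lemma Z_pos (om et : ℤ → ℝ) (k : ℤ) (x : Fin d → ℤ) (m : ℕ) :
    0 < Z d lam h om et k x m := by
  rw [Z]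
  apply div_pos ?_ (by positivity)
  exact Finset.sum_pos (fun s _ => Real.exp_pos _) Finset.univ_nonempty

lemma card_steps (m : ℕ) : (Finset.univ : Finset (Steps d m)).card = 2 ^ (d * m) := by
  simp only [Finset.card_univ, Fintype.card_fun, Fintype.card_bool, Fintype.card_fin]
  exact (pow_mul 2 d m).symm

/-- log Z bound from a uniform hamiltonian bound -/
lemma logZ_le (om et : ℤ → ℝ) (k : ℤ) (x : Fin d → ℤ) (m : ℕ) (B : ℝ)
    (hB : ∀ s : Steps d m, ham d lam h om et k x s ≤ B) :
    Real.log (Z d lam h om et k x m) ≤ B := by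
  rw [← Real.exp_le_exp, Real.exp_log (Z_pos d lam h om et k x m)]
  rw [Z, div_le_iff₀ (by positivity)]
  calc ∑ s : Steps d m, Real.exp (ham d lam h om et k x s)
      ≤ ∑ s : Steps d m, Real.exp B := Finset.sum_le_sum fun s _ => Real.exp_le_exp.mpr (hB s)
    _ = 2 ^ (d * m) * Real.exp B := by
        rw [Finset.sum_const, card_steps]
        simp [mul_comm]
    _ = Real.exp B * 2 ^ (d * m) := by ring

lemma le_logZ (om et : ℤ → ℝ) (k : ℤ) (x : Fin d → ℤ) (m : ℕ) (B : ℝ)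
    (hB : ∀ s : Steps d m, B ≤ ham d lam h om et k x s) :
    B ≤ Real.log (Z d lam h om et k x m) := by
  rw [← Real.exp_le_exp, Real.exp_log (Z_pos d lam h om et k x m)]
  rw [Z, le_div_iff₀ (by positivity)]
  calc Real.exp B * 2 ^ (d * m) = ∑ s : Steps d m, Real.exp B := by
        rw [Finset.sum_const, card_steps]; simp [mul_comm]
    _ ≤ ∑ s : Steps d m, Real.exp (ham d lam h om et k x s) :=
        Finset.sum_le_sum fun s _ => Real.exp_le_exp.mpr (hB s)

lemma ham_abs_le (hlam : 0 ≤ lam) (om et : ℤ → ℝ) (k : ℤ) (x : Fin d → ℤ) (m : ℕ)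
    (hom1 : ∀ j : ℕ, 1 ≤ j → j ≤ m → |om (k + (j:ℤ))| ≤ 1) (s : Steps d m) :
    |ham d lam h om et k x s| ≤ lam * (1 + |h|) * m := by
  rw [ham, abs_mul, abs_of_nonneg hlam]
  have : |∑ j ∈ Finset.Icc 1 m, del d et (k + (j : ℤ)) (pos d x s j) * (om (k + (j : ℤ)) + h)|
      ≤ (1 + |h|) * m := by
    calc |∑ j ∈ Finset.Icc 1 m, del d et (k + (j : ℤ)) (pos d x s j) * (om (k + (j : ℤ)) + h)|
        ≤ ∑ j ∈ Finset.Icc 1 m, |del d et (k + (j : ℤ)) (pos d x s j) * (om (k + (j : ℤ)) + h)| :=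
          Finset.abs_sum_le_sum_abs _ _
      _ ≤ ∑ j ∈ Finset.Icc 1 m, (1 + |h|) := by
          refine Finset.sum_le_sum fun j hj => ?_
          rw [Finset.mem_Icc] at hj
          rw [abs_mul, del_abs, one_mul]
          calc |om (k + (j:ℤ)) + h| ≤ |om (k + (j:ℤ))| + |h| := abs_add_le _ _
            _ ≤ 1 + |h| := by linarith [hom1 j hj.1 hj.2]
      _ = (1 + |h|) * m := by
          rw [Finset.sum_const, Nat.card_Icc, nsmul_eq_mul]
          push_cast
          ring
  calc lam * |∑ j ∈ Finset.Icc 1 m, del d et (k + (j:ℤ)) (pos d x s j) * (om (k + (j:ℤ)) + h)|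
      ≤ lam * ((1 + |h|) * m) := mul_le_mul_of_nonneg_left this hlam
    _ = lam * (1 + |h|) * m := by ring

lemma Fn_abs_le (hlam : 0 ≤ lam) (m : ℕ) (x : Fin m → Bool × Bool) :
    |Fn d lam h m x| ≤ lam * (1 + |h|) * m := by
  have key : ∀ s : Steps d m, |ham d lam h (omOf x) (etOf x) 0 0 s| ≤ lam * (1 + |h|) * m := by
    intro s
    refine ham_abs_le d lam h hlam _ _ 0 0 m (fun j h1 h2 => ?_) s
    rw [zero_add, omOf_eval x j h1 h2, val_abs]
  rw [abs_le]
  constructor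
  · exact le_logZ d lam h _ _ 0 0 m _ (fun s => neg_le_of_abs_le (key s))
  · exact logZ_le d lam h _ _ 0 0 m _ (fun s => le_of_abs_le (key s))


lemma ham_congr (om et om' et' : ℤ → ℝ) (k k' : ℤ) (x : Fin d → ℤ) {m : ℕ} (s : Steps d m)
    (hom : ∀ j : ℕ, 1 ≤ j → j ≤ m → om (k + (j:ℤ)) = om' (k' + (j:ℤ)))
    (het : ∀ j : ℕ, 1 ≤ j → j ≤ m → et (k + (j:ℤ)) = et' (k' + (j:ℤ))) :
    ham d lam h om et k x s = ham d lam h om' et' k' x s := by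
  rw [ham, ham]
  congr 1
  refine Finset.sum_congr rfl fun j hj => ?_
  rw [Finset.mem_Icc] at hj
  rw [del, del, het j hj.1 hj.2, hom j hj.1 hj.2]

lemma Z_congr (om et om' et' : ℤ → ℝ) (k k' : ℤ) (x : Fin d → ℤ) (m : ℕ)
    (hom : ∀ j : ℕ, 1 ≤ j → j ≤ m → om (k + (j:ℤ)) = om' (k' + (j:ℤ)))
    (het : ∀ j : ℕ, 1 ≤ j → j ≤ m → et (k + (j:ℤ)) = et' (k' + (j:ℤ))) :
    Z d lam h om et k x m = Z d lam h om' et' k' x m := by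
  have hs : (∑ s : Steps d m, Real.exp (ham d lam h om et k x s)) =
      ∑ s : Steps d m, Real.exp (ham d lam h om' et' k' x s) :=
    Finset.sum_congr rfl fun s _ => by
      rw [ham_congr d lam h om et om' et' k k' x s hom het]
  rw [Z, Z, hs]

lemma logZ_le_logZ_add (om et om' et' : ℤ → ℝ) (k : ℤ) (x : Fin d → ℤ) (m : ℕ) (c : ℝ)
    (hham : ∀ s : Steps d m, ham d lam h om et k x s ≤ ham d lam h om' et' k x s + c) :
    Real.log (Z d lam h om et k x m) ≤ Real.log (Z d lam h om' et' k x m) + c := by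
  have hZ : Z d lam h om et k x m ≤ Z d lam h om' et' k x m * Real.exp c := by
    rw [Z, Z, div_mul_eq_mul_div]
    rw [div_le_div_iff_of_pos_right (by positivity)]
    rw [Finset.sum_mul]
    refine Finset.sum_le_sum fun s _ => ?_
    rw [← Real.exp_add]
    exact Real.exp_le_exp.mpr (hham s)
  calc Real.log (Z d lam h om et k x m) ≤ Real.log (Z d lam h om' et' k x m * Real.exp c) :=
        Real.log_le_log (Z_pos d lam h om et k x m) hZ
    _ = Real.log (Z d lam h om' et' k x m) + c := by
        rw [Real.log_mul (Z_pos d lam h om' et' k x m).ne' (Real.exp_pos _).ne', Real.log_exp]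

lemma Fn_bdd_diff (hlam : 0 ≤ lam) (m : ℕ) (x y : Fin m → Bool × Bool) (j0 : Fin m)
    (hxy : ∀ i, i ≠ j0 → x i = y i) :
    |Fn d lam h m x - Fn d lam h m y| ≤ 2 * lam * (1 + |h|) := by
  set c : ℝ := 2 * lam * (1 + |h|) with hc
  -- terms agree away from j0+1
  have hterm : ∀ s : Steps d m, ∀ j : ℕ, 1 ≤ j → j ≤ m → j ≠ (j0 : ℕ) + 1 →
      del d (etOf x) ((0:ℤ) + (j:ℤ)) (pos d 0 s j) * (omOf x ((0:ℤ)+(j:ℤ)) + h) =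
      del d (etOf y) ((0:ℤ) + (j:ℤ)) (pos d 0 s j) * (omOf y ((0:ℤ)+(j:ℤ)) + h) := by
    intro s j h1 h2 hne
    have hxyj : x ⟨j - 1, by omega⟩ = y ⟨j - 1, by omega⟩ := by
      refine hxy _ fun hjj => hne ?_
      have := congrArg Fin.val hjj
      simp at this
      omega
    rw [zero_add, del, del, omOf_eval x j h1 h2, omOf_eval y j h1 h2,
      etOf_eval x j h1 h2, etOf_eval y j h1 h2, hxyj]
  -- single-term bound
  have habs : ∀ (z : Fin m → Bool × Bool) (s : Steps d m) (j : ℕ), 1 ≤ j → j ≤ m →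
      |del d (etOf z) ((0:ℤ)+(j:ℤ)) (pos d 0 s j) * (omOf z ((0:ℤ)+(j:ℤ)) + h)| ≤ 1 + |h| := by
    intro z s j h1 h2
    rw [abs_mul, del_abs, one_mul, zero_add, omOf_eval z j h1 h2]
    calc |val (z ⟨j-1, by omega⟩).1 + h| ≤ |val (z ⟨j-1, by omega⟩).1| + |h| := abs_add_le _ _
      _ = 1 + |h| := by rw [val_abs]
  have hham : ∀ s : Steps d m,
      |ham d lam h (omOf x) (etOf x) 0 0 s - ham d lam h (omOf y) (etOf y) 0 0 s| ≤ c := by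
    intro s
    rw [ham, ham, ← mul_sub, ← Finset.sum_sub_distrib, abs_mul, abs_of_nonneg hlam]
    have hj1 : (j0:ℕ) + 1 ∈ Finset.Icc 1 m := by
      rw [Finset.mem_Icc]
      exact ⟨le_add_self, by omega⟩
    have hsum : ∑ j ∈ Finset.Icc 1 m,
        (del d (etOf x) ((0:ℤ)+(j:ℤ)) (pos d 0 s j) * (omOf x ((0:ℤ)+(j:ℤ)) + h)
          - del d (etOf y) ((0:ℤ)+(j:ℤ)) (pos d 0 s j) * (omOf y ((0:ℤ)+(j:ℤ)) + h)) =
        del d (etOf x) ((0:ℤ)+(((j0:ℕ)+1:ℕ):ℤ)) (pos d 0 s ((j0:ℕ)+1)) * (omOf x ((0:ℤ)+(((j0:ℕ)+1:ℕ):ℤ)) + h)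
          - del d (etOf y) ((0:ℤ)+(((j0:ℕ)+1:ℕ):ℤ)) (pos d 0 s ((j0:ℕ)+1)) * (omOf y ((0:ℤ)+(((j0:ℕ)+1:ℕ):ℤ)) + h) := by
      refine Finset.sum_eq_single_of_mem _ hj1 fun j hj hne => ?_
      rw [Finset.mem_Icc] at hj
      rw [hterm s j hj.1 hj.2 hne, sub_self]
    rw [hsum, hc]
    have hb1 := habs x s ((j0:ℕ)+1) (by omega) (by omega)
    have hb2 := habs y s ((j0:ℕ)+1) (by omega) (by omega)
    calc lam * |_ - _| ≤ lam * ((1+|h|) + (1+|h|)) := by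
          refine mul_le_mul_of_nonneg_left ?_ hlam
          exact le_trans (abs_sub _ _) (by linarith)
      _ = 2 * lam * (1 + |h|) := by ring
  have hc0 : 0 ≤ c := by rw [hc]; positivity
  rw [abs_le]
  constructor
  · have := logZ_le_logZ_add d lam h (omOf y) (etOf y) (omOf x) (etOf x) 0 0 m c
      (fun s => by linarith [abs_le.mp (hham s)] )
    rw [Fn, Fn]
    linarith [this]
  · have := logZ_le_logZ_add d lam h (omOf x) (etOf x) (omOf y) (etOf y) 0 0 m c
      (fun s => by linarith [abs_le.mp (hham s)])
    rw [Fn, Fn]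
    linarith [this]


end Poly

section Bridge

variable {Ω : Type*} [MeasurableSpace Ω] (μ : MeasureTheory.Measure Ω)
  [MeasureTheory.IsProbabilityMeasure μ]
  (om et : ℤ → Ω → ℝ) (p : ℝ)

noncomputable def wcP (b : Bool × Bool) : ℝ := (1/2) * (if b.2 then p else 1 - p)

lemma wcP_nonneg (hp0 : 0 < p) (hp1 : p ≤ 1) (b : Bool × Bool) : 0 ≤ wcP p b := by
  rcases b with ⟨b1, b2⟩
  cases b2 <;> simp [wcP] <;> linarith

lemma wcP_sum (b : Bool) : ∑ b : Bool × Bool, wcP p b = 1 := by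
  rw [Fintype.sum_prod_type]
  simp [wcP]

/-- the disorder configuration seen from time `k+1` to `k+m` -/
noncomputable def cfg (k : ℤ) (m : ℕ) (a : Ω) : Fin m → Bool × Bool :=
  fun j => (decide (om (k + 1 + (j:ℤ)) a = 1), decide (et (k + 1 + (j:ℤ)) a = 1))

/-- the atom of the configuration σ-algebra -/
def Atom (k : ℤ) (m : ℕ) (x : Fin m → Bool × Bool) : Set Ω :=
  {a | ∀ j : Fin m, om (k + 1 + (j:ℤ)) a = val (x j).1 ∧ et (k + 1 + (j:ℤ)) a = val (x j).2}

lemma mem_atom_cfg (hom_val : ∀ i a, om i a = 1 ∨ om i a = -1)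
    (het_val : ∀ i a, et i a = 1 ∨ et i a = -1) (k : ℤ) (m : ℕ) (a : Ω) : a ∈ Atom om et k m (cfg om et k m a) := by
  intro j
  constructor
  · rcases hom_val (k+1+(j:ℤ)) a with hv | hv <;> simp [cfg, hv, val] <;> norm_num
  · rcases het_val (k+1+(j:ℤ)) a with hv | hv <;> simp [cfg, hv, val] <;> norm_num

lemma atom_eq_cfg (hom_val : ∀ i a, om i a = 1 ∨ om i a = -1)
    (het_val : ∀ i a, et i a = 1 ∨ et i a = -1) {k : ℤ} {m : ℕ} {x : Fin m → Bool × Bool} {a : Ω}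
    (ha : a ∈ Atom om et k m x) : x = cfg om et k m a := by
  funext j
  have h1 := (ha j).1
  have h2 := (ha j).2
  have h1' := (mem_atom_cfg om et hom_val het_val k m a j).1
  have h2' := (mem_atom_cfg om et hom_val het_val k m a j).2
  exact Prod.ext (val_inj (by rw [← h1, h1'])) (val_inj (by rw [← h2, h2']))

lemma atom_measurable (hom_meas : ∀ i, Measurable (om i)) (het_meas : ∀ i, Measurable (et i))
    (k : ℤ) (m : ℕ) (x : Fin m → Bool × Bool) : MeasurableSet (Atom om et k m x) := by
  have : Atom om et k m x = ⋂ j : Fin m,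
      ({a | om (k + 1 + (j:ℤ)) a = val (x j).1} ∩ {a | et (k + 1 + (j:ℤ)) a = val (x j).2}) := by
    ext a
    simp [Atom, Set.mem_iInter]
  rw [this]
  refine MeasurableSet.iInter fun j => MeasurableSet.inter ?_ ?_
  · exact (hom_meas _) (measurableSet_singleton _)
  · exact (het_meas _) (measurableSet_singleton _)

lemma atoms_disjoint (hom_val : ∀ i a, om i a = 1 ∨ om i a = -1)
    (het_val : ∀ i a, et i a = 1 ∨ et i a = -1)
    (k : ℤ) (m : ℕ) {x y : Fin m → Bool × Bool} (hne : x ≠ y) :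
    Disjoint (Atom om et k m x) (Atom om et k m y) := by
  rw [Set.disjoint_left]
  intro a hax hay
  exact hne ((atom_eq_cfg om et hom_val het_val hax).trans
    (atom_eq_cfg om et hom_val het_val hay).symm)


lemma singleton_prob_om (hom_val : ∀ i a, om i a = 1 ∨ om i a = -1)
    (hom_meas : ∀ i, Measurable (om i))
    (hom_dist : ∀ i, μ {a | om i a = 1} = ENNReal.ofReal (1/2)) (i : ℤ) (b : Bool) :
    μ {a | om i a = val b} = ENNReal.ofReal (1/2) := by
  cases b
  · have hset : {a | om i a = val false} = {a | om i a = 1}ᶜ := by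
      ext a
      rcases hom_val i a with hv | hv <;> simp [val, hv] <;> norm_num
    have hms : MeasurableSet {a | om i a = 1} := (hom_meas i) (measurableSet_singleton 1)
    rw [hset, measure_compl hms (measure_ne_top μ _), hom_dist i, measure_univ]
    rw [← ENNReal.ofReal_one, ← ENNReal.ofReal_sub _ (by norm_num : (0:ℝ) ≤ 1/2)]
    norm_num
  · simp only [val, if_true]
    exact hom_dist i

lemma singleton_prob_et (hp0 : 0 < p) (hp1 : p ≤ 1)
    (het_val : ∀ i a, et i a = 1 ∨ et i a = -1)
    (het_meas : ∀ i, Measurable (et i))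
    (het_dist : ∀ i, μ {a | et i a = 1} = ENNReal.ofReal p) (i : ℤ) (b : Bool) :
    μ {a | et i a = val b} = ENNReal.ofReal (if b then p else 1 - p) := by
  cases b
  · have hset : {a | et i a = val false} = {a | et i a = 1}ᶜ := by
      ext a
      rcases het_val i a with hv | hv <;> simp [val, hv] <;> norm_num
    have hms : MeasurableSet {a | et i a = 1} := (het_meas i) (measurableSet_singleton 1)
    rw [hset, measure_compl hms (measure_ne_top μ _), het_dist i, measure_univ]
    rw [← ENNReal.ofReal_one, ← ENNReal.ofReal_sub _ (le_of_lt hp0)]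
    simp
  · simp only [if_true]
    exact het_dist i

lemma atom_prob
    (hom_meas : ∀ i, Measurable (om i)) (het_meas : ∀ i, Measurable (et i))
    (hom_val : ∀ i a, om i a = 1 ∨ om i a = -1)
    (het_val : ∀ i a, et i a = 1 ∨ et i a = -1)
    (hom_dist : ∀ i, μ {a | om i a = 1} = ENNReal.ofReal (1/2))
    (het_dist : ∀ i, μ {a | et i a = 1} = ENNReal.ofReal p)
    (hindep : ProbabilityTheory.iIndepFun (Sum.elim om et) μ)
    (hp0 : 0 < p) (hp1 : p ≤ 1)
    (k : ℤ) (m : ℕ) (x : Fin m → Bool × Bool) :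
    μ (Atom om et k m x) = ENNReal.ofReal (W (wcP p) x) := by
  classical
  set sets : ℤ ⊕ ℤ → Set ℝ :=
    Sum.elim
      (fun t => if ht : 0 < t - k ∧ t - k ≤ (m:ℤ) then
          {val (x ⟨(t - k - 1).toNat, by omega⟩).1} else Set.univ)
      (fun t => if ht : 0 < t - k ∧ t - k ≤ (m:ℤ) then
          {val (x ⟨(t - k - 1).toNat, by omega⟩).2} else Set.univ) with hsets
  set S1 : Finset (ℤ ⊕ ℤ) := Finset.univ.image (fun j : Fin m => Sum.inl (k + 1 + (j:ℤ))) with hS1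
  set S2 : Finset (ℤ ⊕ ℤ) := Finset.univ.image (fun j : Fin m => Sum.inr (k + 1 + (j:ℤ))) with hS2
  set S : Finset (ℤ ⊕ ℤ) := S1 ∪ S2 with hS
  have hidx : ∀ j : Fin m, 0 < k + 1 + (j:ℤ) - k ∧ k + 1 + (j:ℤ) - k ≤ (m:ℤ) := by
    intro j
    have := j.isLt
    omega
  have hfin : ∀ j : Fin m, (⟨(k + 1 + (j:ℤ) - k - 1).toNat, by have := j.isLt; omega⟩ : Fin m) = j := by
    intro j
    apply Fin.ext
    simp
    omega
  have hseteval1 : ∀ j : Fin m, sets (Sum.inl (k + 1 + (j:ℤ))) = {val (x j).1} := by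
    intro j
    rw [hsets]
    simp only [Sum.elim_inl]
    rw [dif_pos (hidx j), hfin j]
  have hseteval2 : ∀ j : Fin m, sets (Sum.inr (k + 1 + (j:ℤ))) = {val (x j).2} := by
    intro j
    rw [hsets]
    simp only [Sum.elim_inr]
    rw [dif_pos (hidx j), hfin j]
  have hmeas : ∀ i ∈ S, MeasurableSet (sets i) := by
    intro i _
    rcases i with t | t <;> simp only [hsets, Sum.elim_inl, Sum.elim_inr] <;> split <;>
      first | exact measurableSet_singleton _ | exact MeasurableSet.univ
  have hA : Atom om et k m x = ⋂ i ∈ S, (Sum.elim om et i) ⁻¹' sets i := by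
    ext a
    simp only [Set.mem_iInter, Atom, Set.mem_setOf_eq]
    constructor
    · intro ha i hi
      rw [hS, Finset.mem_union] at hi
      rcases hi with hi | hi
      · rw [hS1, Finset.mem_image] at hi
        obtain ⟨j, _, rfl⟩ := hi
        rw [hseteval1 j]
        simp only [Sum.elim_inl, Set.mem_preimage, Set.mem_singleton_iff]
        exact (ha j).1
      · rw [hS2, Finset.mem_image] at hi
        obtain ⟨j, _, rfl⟩ := hi
        rw [hseteval2 j]
        simp only [Sum.elim_inr, Set.mem_preimage, Set.mem_singleton_iff]
        exact (ha j).2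
    · intro hi j
      constructor
      · have h1 := hi (Sum.inl (k + 1 + (j:ℤ)))
          (by rw [hS, Finset.mem_union]; exact Or.inl (by rw [hS1, Finset.mem_image]; exact ⟨j, Finset.mem_univ j, rfl⟩))
        rw [hseteval1 j] at h1
        simpa using h1
      · have h2 := hi (Sum.inr (k + 1 + (j:ℤ)))
          (by rw [hS, Finset.mem_union]; exact Or.inr (by rw [hS2, Finset.mem_image]; exact ⟨j, Finset.mem_univ j, rfl⟩))
        rw [hseteval2 j] at h2
        simpa using h2
  rw [hA, hindep.measure_inter_preimage_eq_mul S hmeas]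
  have hdisj : Disjoint S1 S2 := by
    rw [Finset.disjoint_left]
    intro i hi1 hi2
    rw [hS1, Finset.mem_image] at hi1
    rw [hS2, Finset.mem_image] at hi2
    obtain ⟨j1, _, rfl⟩ := hi1
    obtain ⟨j2, _, h⟩ := hi2
    exact Sum.inr_ne_inl h
  have hinj1 : ∀ j1 ∈ (Finset.univ : Finset (Fin m)), ∀ j2 ∈ (Finset.univ : Finset (Fin m)),
      Sum.inl (α := ℤ) (β := ℤ) (k + 1 + (j1:ℤ)) = Sum.inl (α := ℤ) (β := ℤ) (k + 1 + (j2:ℤ)) → j1 = j2 := by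
    intro j1 _ j2 _ hj
    have := Sum.inl.inj hj
    apply Fin.ext
    omega
  have hinj2 : ∀ j1 ∈ (Finset.univ : Finset (Fin m)), ∀ j2 ∈ (Finset.univ : Finset (Fin m)),
      Sum.inr (α := ℤ) (β := ℤ) (k + 1 + (j1:ℤ)) = Sum.inr (α := ℤ) (β := ℤ) (k + 1 + (j2:ℤ)) → j1 = j2 := by
    intro j1 _ j2 _ hj
    have := Sum.inr.inj hj
    apply Fin.ext
    omega
  rw [hS, Finset.prod_union hdisj, hS1, hS2, Finset.prod_image hinj1, Finset.prod_image hinj2]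
  have hom_term : ∀ j : Fin m,
      μ (Sum.elim om et (Sum.inl (k + 1 + (j:ℤ))) ⁻¹' sets (Sum.inl (k + 1 + (j:ℤ)))) =
        ENNReal.ofReal (1/2) := by
    intro j
    rw [hseteval1 j]
    have : Sum.elim om et (Sum.inl (k + 1 + (j:ℤ))) ⁻¹' {val (x j).1} =
        {a | om (k + 1 + (j:ℤ)) a = val (x j).1} := by
      ext a; simp
    rw [this]
    exact singleton_prob_om μ om hom_val hom_meas hom_dist _ _
  have het_term : ∀ j : Fin m,
      μ (Sum.elim om et (Sum.inr (k + 1 + (j:ℤ))) ⁻¹' sets (Sum.inr (k + 1 + (j:ℤ)))) =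
        ENNReal.ofReal (if (x j).2 then p else 1 - p) := by
    intro j
    rw [hseteval2 j]
    have : Sum.elim om et (Sum.inr (k + 1 + (j:ℤ))) ⁻¹' {val (x j).2} =
        {a | et (k + 1 + (j:ℤ)) a = val (x j).2} := by
      ext a; simp
    rw [this]
    exact singleton_prob_et μ et p hp0 hp1 het_val het_meas het_dist _ _
  rw [Finset.prod_congr rfl (fun j _ => hom_term j), Finset.prod_congr rfl (fun j _ => het_term j)]
  rw [Finset.prod_const]
  rw [← ENNReal.ofReal_prod_of_nonneg (fun j _ => by split <;> [linarith; linarith])]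
  rw [← ENNReal.ofReal_pow (by norm_num)]
  rw [← ENNReal.ofReal_mul (by positivity)]
  congr 1
  rw [W]
  rw [show (fun j => wcP p (x j)) = fun j => (1/2) * (if (x j).2 then p else 1 - p) from rfl]
  rw [Finset.prod_mul_distrib, Finset.prod_const]


lemma W_wcP_nonneg {p : ℝ} (hp0 : 0 < p) (hp1 : p ≤ 1) {m : ℕ} (x : Fin m → Bool × Bool) :
    0 ≤ W (wcP p) x :=
  Finset.prod_nonneg fun j _ => by
    rcases (x j) with ⟨b1, b2⟩
    cases b2 <;> simp [wcP] <;> linarith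

variable (hom_meas : ∀ i, Measurable (om i)) (het_meas : ∀ i, Measurable (et i))
    (hom_val : ∀ i a, om i a = 1 ∨ om i a = -1)
    (het_val : ∀ i a, et i a = 1 ∨ et i a = -1)
    (hom_dist : ∀ i, μ {a | om i a = 1} = ENNReal.ofReal (1/2))
    (het_dist : ∀ i, μ {a | et i a = 1} = ENNReal.ofReal p)
    (hindep : ProbabilityTheory.iIndepFun (Sum.elim om et) μ)
    (hp0 : 0 < p) (hp1 : p ≤ 1)

include hom_meas het_meas hom_val het_val hom_dist het_dist hindep hp0 hp1 in
lemma measure_cfg_mem (k : ℤ) (m : ℕ) (T : Finset (Fin m → Bool × Bool)) :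
    μ {a | cfg om et k m a ∈ T} = ENNReal.ofReal (∑ x ∈ T, W (wcP p) x) := by
  have hset : {a | cfg om et k m a ∈ T} = ⋃ x ∈ T, Atom om et k m x := by
    ext a
    simp only [Set.mem_setOf_eq, Set.mem_iUnion]
    constructor
    · intro hT
      exact ⟨cfg om et k m a, hT, mem_atom_cfg om et hom_val het_val k m a⟩
    · rintro ⟨x, hxT, hax⟩
      rwa [← atom_eq_cfg om et hom_val het_val hax]
  rw [hset, measure_biUnion_finset ?hd (fun x _ => atom_measurable om et hom_meas het_meas k m x)]
  case hd =>
    intro x _ y _ hne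
    exact atoms_disjoint om et hom_val het_val k m hne
  rw [ENNReal.ofReal_sum_of_nonneg (fun x (_ : x ∈ T) => W_wcP_nonneg hp0 hp1 x)]
  exact Finset.sum_congr rfl fun x _ =>
    atom_prob μ om et p hom_meas het_meas hom_val het_val hom_dist het_dist hindep hp0 hp1 k m x

include hom_meas het_meas hom_val het_val in
lemma cfg_comp_repr (k : ℤ) (m : ℕ) (Fc : (Fin m → Bool × Bool) → ℝ) :
    (fun a => Fc (cfg om et k m a)) = fun a => ∑ x : Fin m → Bool × Bool,
      Set.indicator (Atom om et k m x) (fun _ => Fc x) a := by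
  funext a
  rw [Finset.sum_eq_single (cfg om et k m a)]
  · rw [Set.indicator_of_mem (mem_atom_cfg om et hom_val het_val k m a)]
  · intro x _ hne
    exact Set.indicator_of_notMem
      (fun hmem => hne (atom_eq_cfg om et hom_val het_val hmem)) _
  · intro hmem
    exact absurd (Finset.mem_univ _) hmem

include hom_meas het_meas hom_val het_val in
lemma cfg_comp_measurable (k : ℤ) (m : ℕ) (Fc : (Fin m → Bool × Bool) → ℝ) :
    Measurable (fun a => Fc (cfg om et k m a)) := by
  rw [cfg_comp_repr om et hom_meas het_meas hom_val het_val k m Fc]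
  exact Finset.measurable_sum _ fun x _ =>
    Measurable.indicator measurable_const (atom_measurable om et hom_meas het_meas k m x)

include hom_meas het_meas hom_val het_val hom_dist het_dist hindep hp0 hp1 in
lemma integral_cfg (k : ℤ) (m : ℕ) (Fc : (Fin m → Bool × Bool) → ℝ) :
    ∫ a, Fc (cfg om et k m a) ∂μ = ∑ x : Fin m → Bool × Bool, W (wcP p) x * Fc x := by
  rw [cfg_comp_repr om et hom_meas het_meas hom_val het_val k m Fc]
  rw [integral_finset_sum _ (fun x _ => (integrable_const (Fc x)).indicator
    (atom_measurable om et hom_meas het_meas k m x))]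
  refine Finset.sum_congr rfl fun x _ => ?_
  rw [integral_indicator_const (Fc x) (atom_measurable om et hom_meas het_meas k m x)]
  rw [measureReal_def, atom_prob μ om et p hom_meas het_meas hom_val het_val hom_dist het_dist hindep hp0 hp1 k m x]
  rw [ENNReal.toReal_ofReal (W_wcP_nonneg hp0 hp1 x)]
  rw [smul_eq_mul]


end Bridge

end HeteroAux

namespace Hetero

/-- **Lemma 4.1.** Let `p ∈ (0,1]`, `λ, δ > 0` and `h ∈ ℝ` with `Φ_p(λ,h) > λh + δ`.
Then for every `ε ∈ (0,δ)` there is `δ̃ > 0` such that for all large `m`,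
`ℙ[(1/m) log Z^0_{-m,0} < Φ_p(λ,h) - ε] ≤ exp{-δ̃ m}`.  Here `Φ` denotes the
deterministic free energy `Φ_p(λ,h) = lim (1/n) log Z^n_{0,0}`. -/
theorem localized_large_deviation
    (d : ℕ) (hd : 1 ≤ d) (lam h p δ : ℝ) (hlam : 0 < lam) (hδ : 0 < δ)
    (hp : p ∈ Set.Ioc (0:ℝ) 1)
    {Ω : Type*} [MeasurableSpace Ω] (μ : MeasureTheory.Measure Ω) [MeasureTheory.IsProbabilityMeasure μ]
    (om et : ℤ → Ω → ℝ)
    (hom_meas : ∀ i, Measurable (om i)) (het_meas : ∀ i, Measurable (et i))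
    (hom_val : ∀ i a, om i a = 1 ∨ om i a = -1)
    (het_val : ∀ i a, et i a = 1 ∨ et i a = -1)
    (hom_dist : ∀ i, μ {a | om i a = 1} = ENNReal.ofReal (1/2))
    (het_dist : ∀ i, μ {a | et i a = 1} = ENNReal.ofReal p)
    (hindep : ProbabilityTheory.iIndepFun
      (Sum.elim om et) μ)
    (Φ : ℝ)
    (hΦ : ∀ᵐ a ∂μ, Tendsto
      (fun n : ℕ => (1 / n : ℝ) * Real.log (Z d lam h (fun i => om i a) (fun i => et i a) 0 0 n))
      atTop (nhds Φ))
    (hloc : lam * h + δ < Φ) :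
    ∀ ε : ℝ, 0 < ε → ε < δ → ∃ δt : ℝ, 0 < δt ∧ ∃ M : ℕ, ∀ m : ℕ, M ≤ m →
      μ {a | (1 / m : ℝ) *
          Real.log (Z d lam h (fun i => om i a) (fun i => et i a) (-(m : ℤ)) 0 m) < Φ - ε} ≤
        ENNReal.ofReal (Real.exp (-δt * m)) := by
  intro ε hε hεδ
  classical
  have hp0 : 0 < p := hp.1
  have hp1 : p ≤ 1 := hp.2
  have hw0 : ∀ b, 0 ≤ HeteroAux.wcP p b := HeteroAux.wcP_nonneg p hp0 hp1
  have hw1 : ∑ b : Bool × Bool, HeteroAux.wcP p b = 1 := HeteroAux.wcP_sum p true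
  have habs : (0:ℝ) < 1 + |h| := by positivity
  have hc0 : (0:ℝ) < 2 * lam * (1 + |h|) := by positivity
  obtain ⟨s, hs0, hsrate⟩ := HeteroAux.exists_rate hc0 (show (0:ℝ) < ε/4 by linarith)
  refine ⟨s * ε / 4, by positivity, ?_⟩
  -- identify the random log Z with the cube function
  have hID : ∀ (k : ℤ) (n : ℕ) (a : Ω),
      Real.log (Z d lam h (fun i => om i a) (fun i => et i a) k 0 n)
        = HeteroAux.Fn d lam h n (HeteroAux.cfg om et k n a) := by
    intro k n a
    have hom' : ∀ j : ℕ, 1 ≤ j → j ≤ n → (fun i => om i a) (k + (j:ℤ))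
        = HeteroAux.omOf (HeteroAux.cfg om et k n a) (0 + (j:ℤ)) := by
      intro j h1 h2
      rw [zero_add, HeteroAux.omOf_eval _ j h1 h2]
      show om (k + (j:ℤ)) a
        = HeteroAux.val (HeteroAux.cfg om et k n a ⟨j - 1, by omega⟩).1
      rw [HeteroAux.cfg]
      have harg : k + 1 + ((j - 1 : ℕ) : ℤ) = k + (j : ℤ) := by omega
      simp only [harg]
      rw [HeteroAux.val_decide _ (hom_val (k + (j:ℤ)) a)]
    have het' : ∀ j : ℕ, 1 ≤ j → j ≤ n → (fun i => et i a) (k + (j:ℤ))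
        = HeteroAux.etOf (HeteroAux.cfg om et k n a) (0 + (j:ℤ)) := by
      intro j h1 h2
      rw [zero_add, HeteroAux.etOf_eval _ j h1 h2]
      show et (k + (j:ℤ)) a
        = HeteroAux.val (HeteroAux.cfg om et k n a ⟨j - 1, by omega⟩).2
      rw [HeteroAux.cfg]
      have harg : k + 1 + ((j - 1 : ℕ) : ℤ) = k + (j : ℤ) := by omega
      simp only [harg]
      rw [HeteroAux.val_decide _ (het_val (k + (j:ℤ)) a)]
    rw [HeteroAux.Fn, HeteroAux.Z_congr d lam h (fun i => om i a) (fun i => et i a)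
      (HeteroAux.omOf (HeteroAux.cfg om et k n a)) (HeteroAux.etOf (HeteroAux.cfg om et k n a))
      k 0 0 n hom' het']
  -- mean convergence via dominated convergence
  have hmeasF : ∀ n : ℕ, MeasureTheory.AEStronglyMeasurable
      (fun a => (1/(n:ℝ)) * HeteroAux.Fn d lam h n (HeteroAux.cfg om et 0 n a)) μ :=
    fun n => ((HeteroAux.cfg_comp_measurable om et hom_meas het_meas hom_val het_val 0 n
      (HeteroAux.Fn d lam h n)).const_mul _).aestronglyMeasurable
  have hbound : ∀ n : ℕ, ∀ᵐ a ∂μ,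
      ‖(1/(n:ℝ)) * HeteroAux.Fn d lam h n (HeteroAux.cfg om et 0 n a)‖ ≤ lam * (1 + |h|) := by
    intro n
    refine Filter.Eventually.of_forall fun a => ?_
    rcases Nat.eq_zero_or_pos n with rfl | hn
    · simp
      positivity
    · have hFb := HeteroAux.Fn_abs_le d lam h hlam.le n (HeteroAux.cfg om et 0 n a)
      have hnpos : (0:ℝ) < n := by exact_mod_cast hn
      rw [Real.norm_eq_abs, abs_mul, abs_of_nonneg (by positivity : (0:ℝ) ≤ 1/(n:ℝ))]
      calc (1/(n:ℝ)) * |HeteroAux.Fn d lam h n (HeteroAux.cfg om et 0 n a)|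
          ≤ (1/(n:ℝ)) * (lam * (1+|h|) * n) :=
            mul_le_mul_of_nonneg_left hFb (by positivity)
        _ = lam * (1 + |h|) := by field_simp
  have hlim : ∀ᵐ a ∂μ, Filter.Tendsto
      (fun n : ℕ => (1/(n:ℝ)) * HeteroAux.Fn d lam h n (HeteroAux.cfg om et 0 n a))
      Filter.atTop (nhds Φ) := by
    filter_upwards [hΦ] with a ha
    have heq : (fun n : ℕ => (1/(n:ℝ)) *
          Real.log (Z d lam h (fun i => om i a) (fun i => et i a) 0 0 n))
        = fun n : ℕ => (1/(n:ℝ)) * HeteroAux.Fn d lam h n (HeteroAux.cfg om et 0 n a) :=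
      funext fun n => by rw [hID 0 n a]
    rwa [heq] at ha
  have hconv0 := MeasureTheory.tendsto_integral_of_dominated_convergence
      (μ := μ) (f := fun _ => Φ) (fun _ => lam * (1 + |h|)) hmeasF
      (MeasureTheory.integrable_const _) hbound hlim
  have hconst : ∫ (_ : Ω), Φ ∂μ = Φ := by simp
  rw [hconst] at hconv0
  have hInt : (fun n : ℕ => ∫ a, (1/(n:ℝ)) * HeteroAux.Fn d lam h n (HeteroAux.cfg om et 0 n a) ∂μ)
      = fun n : ℕ => (1/(n:ℝ)) * HeteroAux.Ew (HeteroAux.wcP p) (HeteroAux.Fn d lam h n) := by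
    funext n
    rw [MeasureTheory.integral_const_mul]
    rw [HeteroAux.integral_cfg μ om et p hom_meas het_meas hom_val het_val hom_dist het_dist
      hindep hp0 hp1 0 n (HeteroAux.Fn d lam h n)]
    rfl
  rw [hInt] at hconv0
  obtain ⟨M1, hM1⟩ := Filter.eventually_atTop.mp
    (hconv0.eventually (eventually_gt_nhds (show Φ - ε/2 < Φ by linarith)))
  refine ⟨max M1 1, fun m hm => ?_⟩
  have hm1 : 1 ≤ m := le_trans (le_max_right _ _) hm
  have hmM1 : M1 ≤ m := le_trans (le_max_left _ _) hm
  have hm0 : (0:ℝ) < m := by exact_mod_cast hm1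
  have hEn := hM1 m hmM1
  have hsub : {a | (1 / (m:ℝ)) *
        Real.log (Z d lam h (fun i => om i a) (fun i => et i a) (-(m:ℤ)) 0 m) < Φ - ε}
      ⊆ {a | HeteroAux.cfg om et (-(m:ℤ)) m a ∈ Finset.univ.filter
          (fun x => HeteroAux.Fn d lam h m x <
            HeteroAux.Ew (HeteroAux.wcP p) (HeteroAux.Fn d lam h m) - ε/2 * m)} := by
    intro a ha
    simp only [Set.mem_setOf_eq] at ha ⊢
    rw [Finset.mem_filter]
    refine ⟨Finset.mem_univ _, ?_⟩
    rw [← hID (-(m:ℤ)) m a]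
    have h1 : Real.log (Z d lam h (fun i => om i a) (fun i => et i a) (-(m:ℤ)) 0 m)
        < (Φ - ε) * m := by
      have h2 := mul_lt_mul_of_pos_left ha hm0
      have h3 : (m:ℝ) * ((1/(m:ℝ)) *
          Real.log (Z d lam h (fun i => om i a) (fun i => et i a) (-(m:ℤ)) 0 m))
          = Real.log (Z d lam h (fun i => om i a) (fun i => et i a) (-(m:ℤ)) 0 m) := by
        field_simp
      rw [h3] at h2
      linarith [h2]
    have h4 : (Φ - ε/2) * m < HeteroAux.Ew (HeteroAux.wcP p) (HeteroAux.Fn d lam h m) := by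
      have h5 := mul_lt_mul_of_pos_right hEn hm0
      have h6 : (1/(m:ℝ)) * HeteroAux.Ew (HeteroAux.wcP p) (HeteroAux.Fn d lam h m) * (m:ℝ)
          = HeteroAux.Ew (HeteroAux.wcP p) (HeteroAux.Fn d lam h m) := by
        field_simp
      rw [h6] at h5
      linarith [h5]
    nlinarith [h1, h4, hm0]
  calc μ {a | (1 / (m:ℝ)) *
        Real.log (Z d lam h (fun i => om i a) (fun i => et i a) (-(m:ℤ)) 0 m) < Φ - ε}
      ≤ μ {a | HeteroAux.cfg om et (-(m:ℤ)) m a ∈ Finset.univ.filter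
          (fun x => HeteroAux.Fn d lam h m x <
            HeteroAux.Ew (HeteroAux.wcP p) (HeteroAux.Fn d lam h m) - ε/2 * m)} :=
        measure_mono hsub
    _ = ENNReal.ofReal (∑ x ∈ Finset.univ.filter
          (fun x => HeteroAux.Fn d lam h m x <
            HeteroAux.Ew (HeteroAux.wcP p) (HeteroAux.Fn d lam h m) - ε/2 * m),
          HeteroAux.W (HeteroAux.wcP p) x) :=
        HeteroAux.measure_cfg_mem μ om et p hom_meas het_meas hom_val het_val hom_dist het_dist
          hindep hp0 hp1 (-(m:ℤ)) m _
    _ ≤ ENNReal.ofReal (Real.exp (-(s * (ε/2 * m))) *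
          Real.cosh (s * (2 * lam * (1 + |h|))) ^ m) := by
        apply ENNReal.ofReal_le_ofReal
        exact HeteroAux.cube_chernoff (HeteroAux.wcP p) hw0 hw1 hc0 hs0.le (ε/2 * m) m
          (HeteroAux.Fn d lam h m)
          (fun x y j hxy => HeteroAux.Fn_bdd_diff d lam h hlam.le m x y j hxy)
    _ ≤ ENNReal.ofReal (Real.exp (-(s * ε / 4) * m)) := by
        apply ENNReal.ofReal_le_ofReal
        have hpow : Real.cosh (s * (2 * lam * (1 + |h|))) ^ m ≤ Real.exp (s * (ε/4)) ^ m :=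
          pow_le_pow_left₀ (le_of_lt (Real.cosh_pos _)) hsrate.le m
        calc Real.exp (-(s * (ε/2 * m))) * Real.cosh (s * (2 * lam * (1 + |h|))) ^ m
            ≤ Real.exp (-(s * (ε/2 * m))) * Real.exp (s * (ε/4)) ^ m :=
              mul_le_mul_of_nonneg_left hpow (Real.exp_nonneg _)
          _ = Real.exp (-(s * (ε/2 * m)) + (m:ℝ) * (s * (ε/4))) := by
              rw [← Real.exp_nat_mul, ← Real.exp_add]
          _ ≤ Real.exp (-(s * ε / 4) * m) := by
              apply Real.exp_le_exp.mpr
              nlinarith [hm0, hs0, hε]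



end Hetero
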